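/- arXiv:1411.6226 — 3 statements merged into one kernel-verified Lean document; each statement's English description precedes it below -/
import Mathlib

section
/- A digraph G is 2-path-dominant if and only if the underlying simple graph of G (in which distinct vertices u,v are adjacent if and only if at least one of uv, vu is an edge of G) is complete multipartite, i.e., non-adjacency in the underlying simple graph is an equivalence relation on V(G) (equivalently, the complement of the underlying simple graph is a disjoint union of complete graphs). -/
open List

/-! Basic digraph/path definitions.  A digraph on `V` is a relation `G : V → V → Prop`
(looplessness is expressed by `Irreflexive G`).  A (directed) path is a nonempty list of
distinct vertices in which consecutive vertices are joined by edges of `G`. -/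

/-- `uv` is an edge of the path `P`, i.e. `u,v` are consecutive on `P`. -/
def PEdge {V : Type} (P : List V) (u v : V) : Prop := [u, v] <:+: P

/-- `P` is a directed path of the digraph `G`. -/
def IsPath {V : Type} (G : V → V → Prop) (P : List V) : Prop :=
  P ≠ [] ∧ P.Nodup ∧ P.Chain' G

/-- `P` is a minimal path of `G`: for every edge `v_i v_j` of `G` between vertices of `P`,
`j ≤ i + 1`. -/
def IsMinimal {V : Type} (G : V → V → Prop) (P : List V) : Prop :=
  ∀ i j : Fin P.length, G (P.get i) (P.get j) → (j : ℕ) ≤ (i : ℕ) + 1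

/-- `G` is `d`-path-dominant. -/
def PathDominant {V : Type} (d : ℕ) (G : V → V → Prop) : Prop :=
  ∀ P : List V, IsPath G P → IsMinimal G P → P.length = d →
    ∀ v : V, v ∈ P ∨ (∃ w ∈ P, G v w) ∨ (∃ w ∈ P, G w v)

/-- A linkage: a tuple of pairwise vertex-disjoint paths. -/
def IsLinkage {V : Type} (G : V → V → Prop) {k : ℕ} (L : Fin k → List V) : Prop :=
  (∀ i, IsPath G (L i)) ∧ ∀ i j : Fin k, i ≠ j → ∀ v, v ∈ L i → v ∉ L j

/-- `v` is `Q`-outward: `v ∉ Q` and no vertex of `Q` is adjacent from `v`. -/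
def Outward {V : Type} (G : V → V → Prop) (Q : List V) (v : V) : Prop :=
  v ∉ Q ∧ ∀ w ∈ Q, ¬ G v w

/-- `v` is `Q`-inward: `v ∉ Q` and no vertex of `Q` is adjacent to `v`. -/
def Inward {V : Type} (G : V → V → Prop) (Q : List V) (v : V) : Prop :=
  v ∉ Q ∧ ∀ w ∈ Q, ¬ G w v

section Inhab
variable {V : Type} [Inhabited V]

/-- A linkage for the problem instance `(G, s₁, t₁, …, s_k, t_k)`. -/
def IsLinkageFor (G : V → V → Prop) {k : ℕ} (s t : Fin k → V) (L : Fin k → List V) : Prop :=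
  IsLinkage G L ∧ ∀ i, (L i).head! = s i ∧ (L i).getLast! = t i

/-- `x` is a quality: there is an `x`-linkage for the instance. -/
def IsQuality (G : V → V → Prop) {k : ℕ} (s t : Fin k → V) (x : Fin k → ℕ) : Prop :=
  ∃ L : Fin k → List V, IsLinkageFor G s t L ∧ ∀ i, (L i).length = x i

/-- `x` is a key quality: a quality not strictly dominating any other quality. -/
def IsKeyQuality (G : V → V → Prop) {k : ℕ} (s t : Fin k → V) (x : Fin k → ℕ) : Prop :=
  IsQuality G s t x ∧ ¬ ∃ y : Fin k → ℕ, IsQuality G s t y ∧ y ≤ x ∧ y ≠ x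

/-- `v` is an internal vertex of the linkage `M`. -/
def Internal {k : ℕ} (M : Fin k → List V) (v : V) : Prop :=
  (∃ i, v ∈ M i) ∧ ∀ i, v ≠ (M i).head! ∧ v ≠ (M i).getLast!

/-- The linkage `M` is internally disjoint from the linkage `L`. -/
def InternallyDisjointFrom {k l : ℕ} (M : Fin k → List V) (L : Fin l → List V) : Prop :=
  ∀ v, Internal M v → ∀ i, v ∉ L i

/-- A planar `(Q,R)`-matching of cardinality `n`. -/
def IsPlanarMatching (G : V → V → Prop) (Q R : List V) {n : ℕ} (M : Fin n → List V) : Prop :=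
  IsLinkage G M ∧ (∀ j, (M j).length = 2 ∨ (M j).length = 3) ∧
  (List.ofFn fun j => (M j).head!).Sublist Q ∧
  (List.ofFn fun j => (M j).getLast!).Sublist R

/-- A planar `(Q,R)`-matching is `s`-spaced. -/
def SSpaced (Q R : List V) {n : ℕ} (M : Fin n → List V) (s : ℕ) : Prop :=
  (∀ W : List V, W <:+: Q → W.length ≤ s →
    ∀ j j' : Fin n, (∃ v ∈ W, v ∈ M j) → (∃ v ∈ W, v ∈ M j') → j = j') ∧
  (∀ W : List V, W <:+: R → W.length ≤ s →
    ∀ j j' : Fin n, (∃ v ∈ W, v ∈ M j) → (∃ v ∈ W, v ∈ M j') → j = j')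

/-- `A(L)`: vertices outside `V(L)` that are `(M_j ∖ t(M_j))`-inward for some `j`
with `t(M_j) ≠ t_j`. -/
def RailA (G : V → V → Prop) {k : ℕ} (t : Fin k → V) (L : Fin k → List V) : Set V :=
  {v | (∀ i, v ∉ L i) ∧ ∃ j, (L j).getLast! ≠ t j ∧ ∀ w ∈ (L j).dropLast, ¬ G w v}

/-- `B(L)`: vertices outside `V(L)` that are `(M_j ∖ s(M_j))`-outward for some `j`
with `s(M_j) ≠ s_j`. -/
def RailB (G : V → V → Prop) {k : ℕ} (s : Fin k → V) (L : Fin k → List V) : Set V :=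
  {v | (∀ i, v ∉ L i) ∧ ∃ j, (L j).head! ≠ s j ∧ ∀ w ∈ (L j).tail, ¬ G v w}

/-- The confusion of the linkage `L`, namely `|A(L) ∩ B(L)|`. -/
noncomputable def Confusion (G : V → V → Prop) {k : ℕ} (s t : Fin k → V)
    (L : Fin k → List V) : ℕ :=
  (RailA G t L ∩ RailB G s L).ncard

/-- `(L, X, Y)` is a `(k,m,c)`-rail in the problem instance. -/
def IsRail (G : V → V → Prop) {k : ℕ} (s t : Fin k → V) (m c : ℕ)
    (L : Fin k → List V) (X Y : Set V) : Prop :=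
  IsLinkage G L ∧
  (∀ j, (L j).length ≤ 2*m ∧
    ((L j).length < 2*m → (L j).head! = s j ∨ (L j).getLast! = t j)) ∧
  Confusion G s t L ≤ c ∧
  Disjoint X Y ∧
  X ⊆ RailA G t L ∧ Y ⊆ RailB G s L ∧ X ∪ Y = RailA G t L ∪ RailB G s L

end Inhab

/-- The data of a potential rail: a `k`-tuple of paths together with two vertex sets. -/
abbrev RailT (V : Type) (k : ℕ) := (Fin k → List V) × Set V × Set V

section Inhab2
variable {V : Type} [Inhabited V]

/-- The edge relation `(L,X,Y) → (L',X',Y')` between distinct rails. -/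
def RailStep (G : V → V → Prop) {k : ℕ} (r r' : RailT V k) : Prop :=
  r ≠ r' ∧
  (∀ i, ∃ W : List V, IsPath G W ∧ W.head! = (r.1 i).head! ∧
    W.getLast! = (r'.1 i).getLast! ∧
    (∀ v, v ∈ W ↔ v ∈ r.1 i ∨ v ∈ r'.1 i) ∧
    (∀ u v, PEdge W u v ↔ PEdge (r.1 i) u v ∨ PEdge (r'.1 i) u v)) ∧
  (∀ i, ∀ v ∈ r'.1 i, v ∈ r.1 i ∨ v ∈ r.2.1) ∧
  (∀ i, ∀ v ∈ r.1 i, v ∈ r'.1 i ∨ v ∈ r'.2.2) ∧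
  r'.2.1 ⊆ r.2.1 ∧ r.2.2 ⊆ r'.2.2

/-- A path from `s₀` to `t₀` in the `(k,m,c)`-tracker, recorded by its list of
intermediate rail vertices. -/
def IsTrackerPath (G : V → V → Prop) {k : ℕ} (s t : Fin k → V) (m c : ℕ)
    (rs : List (RailT V k)) : Prop :=
  rs ≠ [] ∧ rs.Nodup ∧ rs.Chain' (RailStep G) ∧
  (∀ r ∈ rs, IsRail G s t m c r.1 r.2.1 r.2.2) ∧
  (∀ r ∈ rs.head?, ∀ j, (r.1 j).head! = s j) ∧
  (∀ r ∈ rs.getLast?, ∀ j, (r.1 j).getLast! = t j)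

end Inhab2

/-- A tracker path traces the linkage `P`: each `P j` is the union (as a digraph) of the
`j`-th members of the rails of the path. -/
def Traces {V : Type} {k : ℕ} (rs : List (RailT V k)) (P : Fin k → List V) : Prop :=
  ∀ j, (∀ v, v ∈ P j ↔ ∃ r ∈ rs, v ∈ r.1 j) ∧
       (∀ u v, PEdge (P j) u v ↔ ∃ r ∈ rs, PEdge (r.1 j) u v)

section Dec
variable {V : Type} [DecidableEq V]

/-- `V(L)`, the set of vertices of the linkage `L`, as a finset. -/
def LV {k : ℕ} (L : Fin k → List V) : Finset V :=
  Finset.univ.biUnion fun i => (L i).toFinset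

/-- `B` is acceptable for the linkage `L` (with parameters `d, k`). -/
def Acceptable [Inhabited V] (G : V → V → Prop) (d k : ℕ) (L : Fin k → List V)
    (B : Finset V) : Prop :=
  (∀ j : Fin k, ∀ u v : V, PEdge (L j) u v → v ∈ B → u ∈ B) ∧
  ∀ i j : Fin k, ¬ ∃ M : Fin ((k-1)*d + k^2 + 2) → List V,
    IsPlanarMatching G ((L i).filter (· ∈ B)) ((L j).filter (· ∉ B)) M ∧
    InternallyDisjointFrom M L

/-- Labels along a tracker path, after the first rail: consecutive rails `r, r'`
contribute `|V(M'_j) ∖ V(M_j)|` in coordinate `j`. -/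
def labelFrom {k : ℕ} : RailT V k → List (RailT V k) → (Fin k → ℕ)
  | _, [] => fun _ => 0
  | r, r' :: rest => (fun j => ((r'.1 j).toFinset \ (r.1 j).toFinset).card) + labelFrom r' rest

/-- The total label `l(P)` of a tracker path with rail list `rs`: the edge from `s₀`
contributes `|V(M_j)|`, each rail-to-rail edge contributes the difference counts, and the
edge to `t₀` contributes `0`. -/
def pathLabel {k : ℕ} : List (RailT V k) → (Fin k → ℕ)
  | [] => fun _ => 0
  | r :: rest => (fun j => (r.1 j).toFinset.card) + labelFrom r rest

/-- `Q_{p,j}`: the maximal subpath of `P` with at most `m` vertices whose last vertex is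
the last vertex of `P` among `v_1, …, v_p` (null if there is none). -/
def Qseg (m : ℕ) (e : List V) (p : ℕ) (P : List V) : List V :=
  (P.filter (· ∈ e.take p)).drop ((P.filter (· ∈ e.take p)).length - m)

/-- `R_{p,j}`: the maximal subpath of `P` with at most `m` vertices whose first vertex is
the first vertex of `P` among `v_{p+1}, …, v_n` (null if there is none). -/
def Rseg (m : ℕ) (e : List V) (p : ℕ) (P : List V) : List V :=
  (P.filter (· ∈ e.drop p)).take m

/-- `M_{p,j} = Q_{p,j} ∪ R_{p,j}` (together with the connecting edge of `P` when both
are non-null). -/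
def Mseg (m : ℕ) (e : List V) (p : ℕ) (P : List V) : List V :=
  Qseg m e p P ++ Rseg m e p P

end Dec

theorem stmt15 {V : Type} [Fintype V] [DecidableEq V] [Inhabited V]
    (G : V → V → Prop) (hG : Irreflexive G) :
    PathDominant 2 G ↔ Equivalence (fun u v : V => ¬ (u ≠ v ∧ (G u v ∨ G v u))) := by
  constructor
  · intro h
    refine ⟨fun x => by simp, fun {x y} hxy => by tauto, ?_⟩
    intro x y z hxy hyz
    intro ⟨hxz, hedge⟩
    have key : ∀ a b : V, G a b → y ∈ ([a,b] : List V) ∨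
        (∃ w ∈ ([a,b] : List V), G y w) ∨ ∃ w ∈ ([a,b] : List V), G w y := by
      intro a b hab
      refine h [a,b] ⟨by simp, by simp; exact fun h => hG a (h ▸ hab), by simp [List.Chain', hab]⟩
        ?_ rfl y
      · intro i j _
        have hj : (j : ℕ) < 2 := by simpa using j.isLt
        omega
    by_cases hxy' : x = y
    · exact hyz (hxy' ▸ ⟨hxz, hedge⟩)
    by_cases hyz' : y = z
    · exact hxy (hyz' ▸ ⟨hxz, hedge⟩)
    have n1 : ¬G x y ∧ ¬G y x := by tauto
    have n2 : ¬G y z ∧ ¬G z y := by tauto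
    rcases hedge with hxz' | hzx'
    · have := key x z hxz'
      simp only [List.mem_cons, List.not_mem_nil, or_false] at this
      rcases this with (rfl | rfl) | ⟨w, (rfl | rfl), hG1⟩ | ⟨w, (rfl | rfl), hG1⟩ <;> tauto
    · have := key z x hzx'
      simp only [List.mem_cons, List.not_mem_nil, or_false] at this
      rcases this with (rfl | rfl) | ⟨w, (rfl | rfl), hG1⟩ | ⟨w, (rfl | rfl), hG1⟩ <;> tauto
  · intro hE P hP hmin hlen v
    match P, hlen with
    | [a, b], _ =>
      have hab : G a b := by
        have := hP.2.2
        simpa [List.Chain'] using this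
      have hne : a ≠ b := by
        have := hP.2.1
        simp at this
        exact this
      by_contra hcon
      push_neg at hcon
      obtain ⟨hv, hcon1, hcon2⟩ := hcon
      simp at hv hcon1 hcon2
      have h1 : (fun u v : V => ¬ (u ≠ v ∧ (G u v ∨ G v u))) a v := by tauto
      have h2 : (fun u v : V => ¬ (u ≠ v ∧ (G u v ∨ G v u))) v b := by tauto
      exact hE.trans h1 h2 ⟨hne, Or.inl hab⟩
end

section
/- Let H be a finite digraph with distinct vertices s_0, t_0, let n, k ≥ 0 be integers, let K_n be the set of k-tuples of nonnegative integers whose sum is at most n, and let l : E(H) → K_n. For a path P of H with edge set {e_1,…,e_p}, define l(P) = l(e_1)+…+l(e_p). Define Q_0(s_0) = {(0,…,0)}, Q_0(v) = ∅ for every other vertex v, and for i ≥ 1 let Q_i(v) be the set of vectors that are minimal under componentwise ≤ among the vectors that either belong to Q_{i−1}(v) or are expressible as l(e)+x for some edge e = uv of H and some x ∈ Q_{i−1}(u). Then Q_{|V(H)|}(t_0) equals the set of vectors that are minimal under componentwise ≤ in the set { l(P) : P a path of H from s_0 to t_0 }. -/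
open List

/-- The set of minimal vectors (under componentwise `≤`) of a set of `k`-tuples. -/
def minimalsIn {k : ℕ} (S : Set (Fin k → ℕ)) : Set (Fin k → ℕ) :=
  {x | x ∈ S ∧ ¬ ∃ y ∈ S, y ≤ x ∧ y ≠ x}

/-- The dynamic-programming sets `Q_i(v)` of the vector-valued shortest path algorithm. -/
def Qset {W : Type} [DecidableEq W] {k : ℕ} (H : W → W → Prop) (l : W → W → Fin k → ℕ)
    (s0 : W) : ℕ → W → Set (Fin k → ℕ)
  | 0, v => if v = s0 then {fun _ => 0} else ∅
  | i+1, v => minimalsIn (Qset H l s0 i v ∪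
      {z | ∃ u x, H u v ∧ x ∈ Qset H l s0 i u ∧ z = l u v + x})

/-- `l(P)`: the sum of the labels of the edges of a path, listed by its vertices. -/
def pathCost {W : Type} {k : ℕ} (l : W → W → Fin k → ℕ) : List W → (Fin k → ℕ)
  | [] => fun _ => 0
  | [_] => fun _ => 0
  | u :: v :: rest => l u v + pathCost l (v :: rest)


/-! ### Auxiliary lemmas for `stmt16` -/

lemma sixteen_pathCost_append {W : Type} {k : ℕ} (l : W → W → Fin k → ℕ) :
    ∀ (xs : List W) (x : W) (ys : List W),
      pathCost l (xs ++ x :: ys) = pathCost l (xs ++ [x]) + pathCost l (x :: ys)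
  | [], x, ys => by
      funext i; simp [pathCost]
  | [a], x, ys => by
      funext i; simp [pathCost]
  | a :: b :: xs, x, ys => by
      have ih := sixteen_pathCost_append l (b :: xs) x ys
      show pathCost l (a :: b :: (xs ++ x :: ys)) = _
      rw [show pathCost l (a :: b :: (xs ++ x :: ys))
            = l a b + pathCost l (b :: (xs ++ x :: ys)) from rfl]
      rw [show (b :: (xs ++ x :: ys)) = (b :: xs) ++ x :: ys from rfl, ih]
      show _ = pathCost l (a :: b :: (xs ++ [x])) + _
      rw [show pathCost l (a :: b :: (xs ++ [x]))
            = l a b + pathCost l (b :: (xs ++ [x])) from rfl]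
      rw [show (b :: (xs ++ [x])) = (b :: xs) ++ [x] from rfl, add_assoc]

lemma sixteen_cost_snoc {W : Type} {k : ℕ} (l : W → W → Fin k → ℕ) (P : List W) (u v : W)
    (h : P.getLast? = some u) :
    pathCost l (P ++ [v]) = pathCost l P + l u v := by
  have hne : P ≠ [] := by rintro rfl; simp at h
  have hu : P.getLast hne = u := by
    rw [List.getLast?_eq_getLast hne, Option.some_inj] at h; exact h
  have e : P = P.dropLast ++ [u] := by
    conv_lhs => rw [← List.dropLast_append_getLast hne, hu]
  have huv : pathCost l [u, v] = l u v := by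
    funext i; simp [pathCost]
  calc pathCost l (P ++ [v]) = pathCost l (P.dropLast ++ u :: [v]) := by rw [e]; simp
    _ = pathCost l (P.dropLast ++ [u]) + pathCost l [u, v] :=
        sixteen_pathCost_append l P.dropLast u [v]
    _ = pathCost l P + l u v := by rw [← e, huv]

lemma sixteen_split_dup {W : Type} :
    ∀ (P : List W) (x : W), [x, x] <+ P → ∃ A B₁ B₂ : List W, P = A ++ x :: B₁ ++ x :: B₂
  | [], x, h => by simp at h
  | y :: P, x, h => by
      rcases List.cons_sublist_cons'.mp h with h' | ⟨rfl, h'⟩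
      · obtain ⟨A, B₁, B₂, rfl⟩ := sixteen_split_dup P x h'
        exact ⟨y :: A, B₁, B₂, rfl⟩
      · obtain ⟨B₁, B₂, rfl⟩ := List.append_of_mem (List.singleton_sublist.mp h')
        exact ⟨[], B₁, B₂, rfl⟩

lemma sixteen_extract {W : Type} {k : ℕ} (H : W → W → Prop) (l : W → W → Fin k → ℕ) :
    ∀ (n : ℕ) (P : List W), P.length ≤ n → P ≠ [] → P.Chain' H →
      ∃ P' : List W, IsPath H P' ∧ P'.head? = P.head? ∧ P'.getLast? = P.getLast? ∧
        pathCost l P' ≤ pathCost l P := by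
  intro n
  induction n with
  | zero => intro P hlen hne _; cases P <;> simp_all
  | succ n ih =>
    intro P hlen hne hch
    by_cases hnd : P.Nodup
    · exact ⟨P, ⟨hne, hnd, hch⟩, rfl, rfl, le_refl _⟩
    · obtain ⟨x, hx⟩ := List.exists_duplicate_iff_not_nodup.mpr hnd
      obtain ⟨A, B₁, B₂, rfl⟩ := sixteen_split_dup _ x (List.duplicate_iff_sublist.mp hx)
      have hsplit : A ++ x :: B₁ ++ x :: B₂ = A ++ ((x :: B₁) ++ (x :: B₂)) := by simp
      have hch2 : (A ++ ((x :: B₁) ++ (x :: B₂))).Chain' H := by rw [← hsplit]; exact hch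
      rw [List.Chain', List.isChain_append] at hch2
      obtain ⟨hchA, hchM, hlink⟩ := hch2
      rw [List.isChain_append] at hchM
      have hch' : (A ++ x :: B₂).Chain' H := by
        rw [List.Chain', List.isChain_append]
        exact ⟨hchA, hchM.2.1, fun a ha b hb => hlink a ha b (by simpa using hb)⟩
      have hne' : A ++ x :: B₂ ≠ [] := by simp
      have hlen' : (A ++ x :: B₂).length ≤ n := by
        simp only [List.length_append, List.length_cons] at hlen ⊢
        omega
      obtain ⟨P', hP', hh, hg, hc⟩ := ih (A ++ x :: B₂) hlen' hne' hch'
      refine ⟨P', hP', ?_, ?_, ?_⟩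
      · rw [hh]; cases A <;> simp
      · rw [hg]
        rw [show A ++ x :: B₁ ++ x :: B₂ = (A ++ x :: B₁) ++ (x :: B₂) by simp,
          List.getLast?_append_of_ne_nil _ (by simp),
          List.getLast?_append_of_ne_nil _ (by simp : (x : W) :: B₂ ≠ [])]
      · refine le_trans hc ?_
        rw [sixteen_pathCost_append l A x B₂,
          show A ++ x :: B₁ ++ x :: B₂ = A ++ x :: (B₁ ++ x :: B₂) by simp,
          sixteen_pathCost_append l A x (B₁ ++ x :: B₂)]
        refine add_le_add_right ?_ _
        rw [show (x :: (B₁ ++ x :: B₂)) = (x :: B₁) ++ x :: B₂ from rfl,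
          sixteen_pathCost_append l (x :: B₁) x B₂]
        exact le_add_self

lemma sixteen_sound {W : Type} [DecidableEq W] {k : ℕ} (H : W → W → Prop)
    (l : W → W → Fin k → ℕ) (s0 : W) :
    ∀ (i : ℕ) (v : W) (x : Fin k → ℕ), x ∈ Qset H l s0 i v →
      ∃ P : List W, P ≠ [] ∧ P.Chain' H ∧ P.head? = some s0 ∧ P.getLast? = some v ∧
        pathCost l P = x
  | 0, v, x, hx => by
      by_cases hv : v = s0
      · subst hv
        simp only [Qset, if_pos rfl, Set.mem_singleton_iff] at hx
        exact ⟨[v], by simp, List.isChain_singleton _, rfl, rfl, by rw [hx]; funext i; simp [pathCost]⟩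
      · simp [Qset, hv] at hx
  | (i+1), v, x, hx => by
      rcases hx.1 with h | ⟨u, y, huv, hy, rfl⟩
      · exact sixteen_sound H l s0 i v x h
      · obtain ⟨P, hne, hch, hh, hg, hc⟩ := sixteen_sound H l s0 i u y hy
        refine ⟨P ++ [v], by simp, ?_, ?_, ?_, ?_⟩
        · rw [List.Chain', List.isChain_append]
          refine ⟨hch, List.isChain_singleton v, fun a ha b hb => ?_⟩
          rw [List.head?_cons, Option.mem_some_iff] at hb
          rw [hg, Option.mem_some_iff] at ha
          subst ha; subst hb; exact huv
        · rw [List.head?_append_of_ne_nil _ hne]; exact hh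
        · rw [List.getLast?_append_of_ne_nil _ (by simp : ([v] : List W) ≠ [])]; simp
        · rw [sixteen_cost_snoc l P u v hg, hc, add_comm]

lemma sixteen_min_below {k : ℕ} (T : Set (Fin k → ℕ)) {x : Fin k → ℕ} (hx : x ∈ T) :
    ∃ y ∈ minimalsIn T, y ≤ x := by
  have hfin : (T ∩ Set.Iic x).Finite := Set.Finite.inter_of_right (Set.finite_Iic x) T
  have hne : (T ∩ Set.Iic x).Nonempty := ⟨x, hx, le_refl x⟩
  obtain ⟨a, ha, hmin⟩ : ∃ a ∈ T ∩ Set.Iic x, ∀ y ∈ T ∩ Set.Iic x, y ≤ a → a = y := by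
    obtain ⟨a, ha⟩ := hfin.exists_minimal hne
    exact ⟨a, ha.prop, fun y hy hya => le_antisymm (ha.2 hy hya) hya⟩
  refine ⟨a, ⟨ha.1, ?_⟩, ha.2⟩
  rintro ⟨y, hyT, hya, hyne⟩
  exact hyne ((hmin y ⟨hyT, le_trans hya ha.2⟩ hya).symm)

lemma sixteen_complete {W : Type} [DecidableEq W] {k : ℕ} (H : W → W → Prop)
    (l : W → W → Fin k → ℕ) (s0 : W) :
    ∀ (i : ℕ) (v : W) (P : List W), P ≠ [] → P.Chain' H → P.head? = some s0 →
      P.getLast? = some v → P.length ≤ i + 1 →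
      ∃ y ∈ Qset H l s0 i v, y ≤ pathCost l P := by
  intro i
  induction i with
  | zero =>
    intro v P hne hch hh hg hlen
    match P, hne with
    | [a], _ =>
      have hv : v = s0 := by
        have h1 : a = s0 := by simpa using hh
        have h2 : a = v := by simpa using hg
        rw [← h2, h1]
      refine ⟨fun _ => 0, ?_, ?_⟩
      · simp [Qset, hv]
      · intro j; simp [pathCost]
    | a :: b :: rest, _ => simp at hlen
  | succ i ih =>
    intro v P hne hch hh hg hlen
    match P, hne with
    | [a], _ =>
      obtain ⟨y, hy, hyle⟩ := ih v [a] (by simp) (List.isChain_singleton _) hh hg (by simp)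
      obtain ⟨z, hz, hzy⟩ := sixteen_min_below
        (Qset H l s0 i v ∪
          {z | ∃ u x, H u v ∧ x ∈ Qset H l s0 i u ∧ z = l u v + x}) (Set.mem_union_left _ hy)
      exact ⟨z, hz, le_trans hzy hyle⟩
    | a :: b :: rest, _ =>
      set P := a :: b :: rest with hPdef
      have hne2 : P ≠ [] := by simp [hPdef]
      have hdne : P.dropLast ≠ [] := by simp [hPdef]
      set u := P.dropLast.getLast hdne with hu
      have hsplit : P.dropLast ++ [P.getLast hne2] = P := List.dropLast_append_getLast hne2
      have hgv : P.getLast hne2 = v := by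
        rw [List.getLast?_eq_getLast hne2, Option.some_inj] at hg; exact hg
      have hch2 : (P.dropLast ++ [P.getLast hne2]).Chain' H := by rw [hsplit]; exact hch
      rw [List.Chain', List.isChain_append] at hch2
      obtain ⟨hchd, -, hlink⟩ := hch2
      have huv : H u v := by
        have := hlink u (by rw [List.getLast?_eq_getLast hdne]; rfl)
          (P.getLast hne2) (by simp)
        rwa [hgv] at this
      have hhd : P.dropLast.head? = some s0 := by
        rw [← hh]
        conv_rhs => rw [← hsplit]
        rw [List.head?_append_of_ne_nil _ hdne]
      have hgd : P.dropLast.getLast? = some u := by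
        rw [List.getLast?_eq_getLast hdne]
      have hlend : P.dropLast.length ≤ i + 1 := by
        rw [List.length_dropLast]
        simp only [hPdef, List.length_cons] at hlen ⊢
        omega
      obtain ⟨y, hy, hyle⟩ := ih u P.dropLast hdne hchd hhd hgd hlend
      have hmem : l u v + y ∈ (Qset H l s0 i v ∪
          {z | ∃ u' x, H u' v ∧ x ∈ Qset H l s0 i u' ∧ z = l u' v + x}) :=
        Set.mem_union_right _ ⟨u, y, huv, hy, rfl⟩
      obtain ⟨z, hz, hzle⟩ := sixteen_min_below _ hmem
      refine ⟨z, hz, le_trans hzle ?_⟩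
      have : pathCost l P = pathCost l P.dropLast + l u v := by
        conv_lhs => rw [← hsplit, hgv]
        exact sixteen_cost_snoc l P.dropLast u v hgd
      rw [this, add_comm]
      exact add_le_add_left hyle _

lemma sixteen_antichain {W : Type} [DecidableEq W] {k : ℕ} (H : W → W → Prop)
    (l : W → W → Fin k → ℕ) (s0 : W) (i : ℕ) (v : W) {x y : Fin k → ℕ}
    (hx : x ∈ Qset H l s0 i v) (hy : y ∈ Qset H l s0 i v) (hyx : y ≤ x) : y = x := by
  cases i with
  | zero =>
    by_cases hv : v = s0
    · subst hv; simp only [Qset, if_pos rfl, Set.mem_singleton_iff] at hx hy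
      rw [hx, hy]
    · simp [Qset, hv] at hx
  | succ i =>
    by_contra hne
    exact hx.2 ⟨y, hy.1, hyx, hne⟩

theorem stmt16 {W : Type} [Fintype W] [DecidableEq W]
    (H : W → W → Prop) (hH : Irreflexive H)
    (s0 t0 : W) (hst : s0 ≠ t0) (n k : ℕ)
    (l : W → W → Fin k → ℕ) (hl : ∀ u v, H u v → (∑ i, l u v i) ≤ n) :
    Qset H l s0 (Fintype.card W) t0 =
      minimalsIn {z | ∃ P : List W, IsPath H P ∧ P.head? = some s0 ∧
        P.getLast? = some t0 ∧ pathCost l P = z} := by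
  ext x
  constructor
  · intro hx
    obtain ⟨P₁, hne1, hch1, hh1, hg1, hc1⟩ :=
      sixteen_sound H l s0 (Fintype.card W) t0 x hx
    obtain ⟨P₂, hP₂, hh2, hg2, hc2⟩ := sixteen_extract H l P₁.length P₁ le_rfl hne1 hch1
    have hz : pathCost l P₂ ∈ {z | ∃ P : List W, IsPath H P ∧ P.head? = some s0 ∧
        P.getLast? = some t0 ∧ pathCost l P = z} :=
      ⟨P₂, hP₂, by rw [hh2, hh1], by rw [hg2, hg1], rfl⟩
    obtain ⟨y, hy, hyle⟩ := sixteen_complete H l s0 (Fintype.card W) t0 P₂ hP₂.1 hP₂.2.2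
      (by rw [hh2, hh1]) (by rw [hg2, hg1])
      (le_trans hP₂.2.1.length_le_card (Nat.le_succ _))
    have hyx : y ≤ x := le_trans hyle (hc1 ▸ hc2)
    have hxy : y = x := sixteen_antichain H l s0 (Fintype.card W) t0 hx hy hyx
    have hzx : pathCost l P₂ = x := le_antisymm (hc1 ▸ hc2) (hxy ▸ hyle)
    refine ⟨hzx ▸ hz, ?_⟩
    rintro ⟨w, hwS, hwx, hwne⟩
    obtain ⟨P₃, hP₃, hh3, hg3, hc3⟩ := hwS
    obtain ⟨y', hy', hy'le⟩ := sixteen_complete H l s0 (Fintype.card W) t0 P₃ hP₃.1 hP₃.2.2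
      hh3 hg3 (le_trans hP₃.2.1.length_le_card (Nat.le_succ _))
    have hy'w : y' ≤ w := hc3 ▸ hy'le
    have hy'x : y' = x := sixteen_antichain H l s0 (Fintype.card W) t0 hx hy'
      (le_trans hy'w hwx)
    exact hwne (le_antisymm hwx (hy'x ▸ hy'w))
  · intro hx
    obtain ⟨⟨P, hP, hh, hg, hc⟩, hmin⟩ := hx
    obtain ⟨y, hy, hyle⟩ := sixteen_complete H l s0 (Fintype.card W) t0 P hP.1 hP.2.2 hh hg
      (le_trans hP.2.1.length_le_card (Nat.le_succ _))
    have hyx : y ≤ x := hc ▸ hyle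
    obtain ⟨P₁, hne1, hch1, hh1, hg1, hc1⟩ :=
      sixteen_sound H l s0 (Fintype.card W) t0 y hy
    obtain ⟨P₂, hP₂, hh2, hg2, hc2⟩ := sixteen_extract H l P₁.length P₁ le_rfl hne1 hch1
    have hzS : pathCost l P₂ ∈ {z | ∃ P : List W, IsPath H P ∧ P.head? = some s0 ∧
        P.getLast? = some t0 ∧ pathCost l P = z} :=
      ⟨P₂, hP₂, by rw [hh2, hh1], by rw [hg2, hg1], rfl⟩
    have hzy : pathCost l P₂ ≤ y := hc1 ▸ hc2
    have hzx : pathCost l P₂ ≤ x := le_trans hzy hyx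
    have hzeq : pathCost l P₂ = x := by
      by_contra hne
      exact hmin ⟨_, hzS, hzx, hne⟩
    have hyeq : y = x := le_antisymm hyx (hzeq ▸ hzy)
    rwa [hyeq] at hy
end

section
/- Let d,k ≥ 1 be integers, set c_0 = (k−1)d+k²+2 and m = c_0·d+1. Let (G,s_1,t_1,…,s_k,t_k) be a problem instance where G is a d-path-dominant digraph, let L=(P_1,…,P_k) be a linkage for it, and let (v_1,…,v_n) be an enumeration of V(L) such that: (a) for each h and each edge v_pv_q of P_h, p < q; and (b) for all 1 ≤ h,i ≤ k and 1 ≤ p ≤ n−1, for every subpath Q of P_h|{v_1,…,v_p} with m−1 vertices and every subpath R of P_i|{v_{p+1},…,v_n} with m−1 vertices, at most c_0(2k+1) vertices of G are both Q-outward and R-inward. For 0 ≤ p ≤ n and 1 ≤ j ≤ k define: Q_{p,j} to be the maximal subpath of P_j with at most m vertices whose last vertex is v_q, where q ≤ p is maximum with v_q ∈ V(P_j) (null if no vertex of P_j lies among v_1,…,v_p); R_{p,j} to be the maximal subpath of P_j with at most m vertices whose first vertex is v_r, where r > p is minimum with v_r ∈ V(P_j) (null if no vertex of P_j lies among v_{p+1},…,v_n);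 and M_{p,j} to be Q_{p,j}∪R_{p,j} together with the edge of P_j from the last vertex of Q_{p,j} to the first vertex of R_{p,j} when both are non-null, and to be the non-null one otherwise. Then for every p with 0 ≤ p ≤ n, the linkage L_p=(M_{p,1},…,M_{p,k}) has confusion at most c_0(2k+1)k². -/
open List

section AuxForStmt18
variable {V : Type}

private lemma aux_mem_take_iff [DecidableEq V] {e : List V} {v : V} (hv : v ∈ e) :
    ∀ p : ℕ, v ∈ e.take p ↔ e.idxOf v < p := by
  induction e with
  | nil => cases hv
  | cons a tl ih =>
    intro p
    cases p with
    | zero => simp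
    | succ p =>
      rw [List.take_succ_cons]
      by_cases h : v = a
      · subst h; simp [List.idxOf_cons_self]
      · have hv' : v ∈ tl := (List.mem_cons.mp hv).resolve_left h
        rw [List.idxOf_cons_ne _ (fun hh => h hh.symm)]
        constructor
        · intro hmem
          have hmem' : v ∈ tl.take p := (List.mem_cons.mp hmem).resolve_left h
          have := (ih hv' p).mp hmem'
          omega
        · intro hlt
          exact List.mem_cons_of_mem _ ((ih hv' p).mpr (by omega))

private lemma aux_filter_eq_takeWhile (P : V → Bool) :
    ∀ l : List V, (l.Pairwise fun a b => P b = true → P a = true) →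
      l.filter P = l.takeWhile P
  | [], _ => rfl
  | a :: tl, h => by
    obtain ⟨h1, h2⟩ := List.pairwise_cons.mp h
    by_cases ha : P a = true
    · rw [List.filter_cons_of_pos ha, List.takeWhile_cons_of_pos ha,
        aux_filter_eq_takeWhile P tl h2]
    · rw [List.filter_cons_of_neg ha, List.takeWhile_cons_of_neg ha]
      exact List.filter_eq_nil_iff.mpr fun b hb hPb => ha (h1 b hb hPb)

private lemma aux_filter_not_eq_dropWhile (P : V → Bool) :
    ∀ l : List V, (l.Pairwise fun a b => P b = true → P a = true) →
      l.filter (fun a => !P a) = l.dropWhile P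
  | [], _ => rfl
  | a :: tl, h => by
    obtain ⟨h1, h2⟩ := List.pairwise_cons.mp h
    by_cases ha : P a = true
    · rw [List.filter_cons_of_neg (by simp [ha]), List.dropWhile_cons_of_pos ha,
        aux_filter_not_eq_dropWhile P tl h2]
    · rw [List.filter_cons_of_pos (by simp [ha]), List.dropWhile_cons_of_neg ha]
      congr 1
      refine List.filter_eq_self.mpr fun b hb => ?_
      cases hPb : P b with
      | false => rfl
      | true => exact absurd (h1 b hb hPb) ha

private lemma aux_head!_append [Inhabited V] {X : List V} (Y : List V) (hX : X ≠ []) :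
    (X ++ Y).head! = X.head! := by
  cases X with
  | nil => exact absurd rfl hX
  | cons a tl => rfl

private lemma aux_head!_prefix [Inhabited V] {A l : List V} (h : A <+: l) (hA : A ≠ []) :
    A.head! = l.head! := by
  obtain ⟨B, rfl⟩ := h
  exact (aux_head!_append B hA).symm

private lemma aux_getLast!_append [Inhabited V] (X : List V) {Y : List V} (hY : Y ≠ []) :
    (X ++ Y).getLast! = Y.getLast! := by
  have h1 : Y.getLast? = some (Y.getLast hY) := List.getLast?_eq_getLast hY
  have h2 : (X ++ Y).getLast? = some (Y.getLast hY) := by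
    rw [List.getLast?_append, h1]; rfl
  rw [List.getLast!_of_getLast? h2, List.getLast!_of_getLast? h1]

private lemma aux_getLast!_suffix [Inhabited V] {B l : List V} (h : B <:+ l) (hB : B ≠ []) :
    B.getLast! = l.getLast! := by
  obtain ⟨X, rfl⟩ := h
  exact (aux_getLast!_append X hB).symm

private lemma aux_chain'_pedge (l : List V) : l.Chain' (fun a b => [a, b] <:+: l) := by
  change l.IsChain _
  rw [List.isChain_iff_getElem]
  intro i h
  have h1 : i < l.length := by omega
  have h2 : i + 1 < l.length := by omega
  have key : (l.drop i).take 2 = [l.get ⟨i, h1⟩, l.get ⟨i + 1, h2⟩] := by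
    rw [List.drop_eq_getElem_cons h1, List.drop_eq_getElem_cons h2,
      List.take_succ_cons, List.take_succ_cons, List.take_zero]
    simp [List.get_eq_getElem]
  simp only [List.get_eq_getElem] at key
  rw [← key]
  exact ((List.take_prefix 2 (l.drop i)).isInfix).trans (List.drop_suffix i l).isInfix

private lemma aux_ncard_iUnion_le {ι : Type} [Fintype ι] [Fintype V] (s : ι → Set V) :
    (⋃ i, s i).ncard ≤ ∑ i, (s i).ncard := by
  classical
  have key : ∀ F : Finset ι, (⋃ i ∈ F, s i).ncard ≤ ∑ i ∈ F, (s i).ncard := by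
    intro F
    induction F using Finset.induction_on with
    | empty => simp
    | @insert a F ha ih =>
      rw [Finset.set_biUnion_insert, Finset.sum_insert ha]
      exact (Set.ncard_union_le _ _).trans (add_le_add le_rfl ih)
  have h := key Finset.univ
  simpa using h

end AuxForStmt18

theorem stmt18 {V : Type} [Fintype V] [DecidableEq V] [Inhabited V]
    (G : V → V → Prop) (hG : Irreflexive G)
    (d k : ℕ) (hd : 1 ≤ d) (hk : 1 ≤ k) (hdom : PathDominant d G)
    (c0 m : ℕ) (hc0 : c0 = (k-1)*d + k^2 + 2) (hm : m = c0 * d + 1)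
    (s t : Fin k → V)
    (L : Fin k → List V) (hL : IsLinkageFor G s t L)
    (e : List V) (hnd : e.Nodup) (henum : ∀ v, v ∈ e ↔ v ∈ LV L)
    (ha : ∀ h : Fin k, ∀ p q : Fin e.length,
      PEdge (L h) (e.get p) (e.get q) → (p : ℕ) < (q : ℕ))
    (hb : ∀ h i : Fin k, ∀ p : ℕ, 1 ≤ p → p ≤ e.length - 1 →
      ∀ Q R : List V, Q <:+: (L h).filter (· ∈ e.take p) → Q.length = m - 1 →
        R <:+: (L i).filter (· ∈ e.drop p) → R.length = m - 1 →
        {v : V | Outward G Q v ∧ Inward G R v}.ncard ≤ c0 * (2*k+1)) :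
    ∀ p ≤ e.length, Confusion G s t (fun j => Mseg m e p (L j)) ≤ c0 * (2*k+1) * k^2 := by
  intro p hp
  classical
  have hm1 : 1 ≤ m := by omega
  obtain ⟨⟨hpaths, hdisj⟩, hends⟩ := hL
  have hmem_e : ∀ (j : Fin k) {v : V}, v ∈ L j → v ∈ e := by
    intro j v hv
    exact (henum v).mpr (Finset.mem_biUnion.mpr ⟨j, Finset.mem_univ j, List.mem_toFinset.mpr hv⟩)
  have hnnil : ∀ j : Fin k, L j ≠ [] := fun j => (hpaths j).1
  have hhead : ∀ j, (L j).head! = s j := fun j => (hends j).1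
  have hlast : ∀ j, (L j).getLast! = t j := fun j => (hends j).2
  set Pb : V → Bool := fun v => decide (v ∈ e.take p) with hPb
  -- monotonicity of the predicate along each path
  have hpw : ∀ j : Fin k, (L j).Pairwise fun a b => Pb b = true → Pb a = true := by
    intro j
    have hc : (L j).Chain' (fun a b => e.idxOf a < e.idxOf b) := by
      refine (aux_chain'_pedge (L j)).imp ?_
      intro a b hab
      have haL : a ∈ L j := hab.subset (by simp)
      have hbL : b ∈ L j := hab.subset (by simp)
      have h1 : e.idxOf a < e.length := List.idxOf_lt_length_iff.mpr (hmem_e j haL)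
      have h2 : e.idxOf b < e.length := List.idxOf_lt_length_iff.mpr (hmem_e j hbL)
      have hedge : PEdge (L j) (e.get ⟨e.idxOf a, h1⟩) (e.get ⟨e.idxOf b, h2⟩) := by
        rw [List.idxOf_get h1, List.idxOf_get h2]
        exact hab
      exact ha j _ _ hedge
    have hpw' : (L j).Pairwise (fun a b => e.idxOf a < e.idxOf b) :=
      (@List.isChain_iff_pairwise _ _ _ ⟨fun x y => x.trans y⟩).mp hc
    refine List.Pairwise.imp_of_mem ?_ hpw'
    intro a b haL hbL hlt hPbb
    simp only [hPb, decide_eq_true_eq] at hPbb ⊢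
    exact (aux_mem_take_iff (hmem_e j haL) p).mpr
      (hlt.trans ((aux_mem_take_iff (hmem_e j hbL) p).mp hPbb))
  have hsplit1 : ∀ j : Fin k, (L j).filter (· ∈ e.take p) = (L j).takeWhile Pb :=
    fun j => aux_filter_eq_takeWhile Pb (L j) (hpw j)
  have hsplit2 : ∀ j : Fin k, (L j).filter (· ∈ e.drop p) = (L j).dropWhile Pb := by
    intro j
    rw [← aux_filter_not_eq_dropWhile Pb (L j) (hpw j)]
    refine List.filter_congr ?_
    intro v hv
    have hve := hmem_e j hv
    have hiff : v ∈ e.drop p ↔ ¬ v ∈ e.take p := by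
      constructor
      · intro hd ht
        have hnd' := hnd
        rw [← List.take_append_drop p e] at hnd'
        exact (List.nodup_append'.mp hnd').2.2 ht hd
      · intro ht
        have hv2 : v ∈ e.take p ++ e.drop p := by rw [List.take_append_drop]; exact hve
        exact (List.mem_append.mp hv2).resolve_left ht
    show decide (v ∈ e.drop p) = !Pb v
    rw [decide_eq_decide.mpr hiff, decide_not]
  have hQeq : ∀ j : Fin k, Qseg m e p (L j) =
      ((L j).takeWhile Pb).drop (((L j).takeWhile Pb).length - m) := by
    intro j; unfold Qseg; rw [hsplit1 j]
  have hReq : ∀ j : Fin k, Rseg m e p (L j) = ((L j).dropWhile Pb).take m := by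
    intro j; unfold Rseg; rw [hsplit2 j]
  have hMj : ∀ j : Fin k, Mseg m e p (L j) = Qseg m e p (L j) ++ Rseg m e p (L j) :=
    fun _ => rfl
  -- condition from the B side (head of M differs from s)
  have condB : ∀ i : Fin k, (Mseg m e p (L i)).head! ≠ s i →
      (Qseg m e p (L i)).length = m ∧ 1 ≤ p ∧ Qseg m e p (L i) ≠ [] := by
    intro i hne'
    by_cases hA0 : (L i).takeWhile Pb = []
    · exfalso
      have hBL : (L i).dropWhile Pb = L i := by
        have h := List.takeWhile_append_dropWhile (p := Pb) (l := L i)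
        rw [hA0, List.nil_append] at h
        exact h
      have hQ0 : Qseg m e p (L i) = [] := by rw [hQeq i, hA0]; simp
      have hMeq : Mseg m e p (L i) = (L i).take m := by
        rw [hMj i, hQ0, hReq i, hBL, List.nil_append]
      have htne : (L i).take m ≠ [] := by
        intro h0
        rcases List.take_eq_nil_iff.mp h0 with h | h
        · omega
        · exact hnnil i h
      exact hne' (by rw [hMeq, aux_head!_prefix (List.take_prefix m (L i)) htne, hhead i])
    by_cases hAm : ((L i).takeWhile Pb).length ≤ m
    · exfalso
      have hQA : Qseg m e p (L i) = (L i).takeWhile Pb := by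
        rw [hQeq i, Nat.sub_eq_zero_of_le hAm, List.drop_zero]
      exact hne' (by
        rw [hMj i, hQA, aux_head!_append _ hA0,
          aux_head!_prefix (List.takeWhile_prefix _) hA0, hhead i])
    · push_neg at hAm
      have hQlen : (Qseg m e p (L i)).length = m := by
        rw [hQeq i, List.length_drop]; omega
      refine ⟨hQlen, ?_, ?_⟩
      · by_contra hcon
        have hp0 : p = 0 := by omega
        obtain ⟨x, hx⟩ := List.exists_mem_of_ne_nil _ hA0
        have hPx := List.mem_takeWhile_imp hx
        simp only [hPb, decide_eq_true_eq] at hPx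
        rw [hp0] at hPx
        simp at hPx
      · intro h0
        rw [h0] at hQlen
        simp at hQlen
        omega
  -- condition from the A side (last of M differs from t)
  have condA : ∀ j : Fin k, (Mseg m e p (L j)).getLast! ≠ t j →
      (Rseg m e p (L j)).length = m ∧ p ≤ e.length - 1 ∧ Rseg m e p (L j) ≠ [] := by
    intro j hne'
    by_cases hB0 : (L j).dropWhile Pb = []
    · exfalso
      have hAL : (L j).takeWhile Pb = L j := by
        have h := List.takeWhile_append_dropWhile (p := Pb) (l := L j)
        rw [hB0, List.append_nil] at h
        exact h
      have hR0 : Rseg m e p (L j) = [] := by rw [hReq j, hB0]; simp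
      have hQsuf : Qseg m e p (L j) <:+ L j := by
        rw [hQeq j, hAL]; exact List.drop_suffix _ _
      have hQne : Qseg m e p (L j) ≠ [] := by
        rw [hQeq j, hAL]
        intro h0
        have hle := List.drop_eq_nil_iff.mp h0
        have hL0 : 0 < (L j).length := List.length_pos_iff.mpr (hnnil j)
        omega
      exact hne' (by
        rw [hMj j, hR0, List.append_nil, aux_getLast!_suffix hQsuf hQne, hlast j])
    by_cases hBm : ((L j).dropWhile Pb).length ≤ m
    · exfalso
      have hRB : Rseg m e p (L j) = (L j).dropWhile Pb := by
        rw [hReq j]; exact List.take_of_length_le hBm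
      exact hne' (by
        rw [hMj j, hRB, aux_getLast!_append _ hB0,
          aux_getLast!_suffix (List.dropWhile_suffix _) hB0, hlast j])
    · push_neg at hBm
      have hRlen : (Rseg m e p (L j)).length = m := by
        rw [hReq j, List.length_take]; omega
      refine ⟨hRlen, ?_, ?_⟩
      · obtain ⟨x, hx⟩ := List.exists_mem_of_ne_nil _ hB0
        have hx' : x ∈ (L j).filter (· ∈ e.drop p) := by rw [hsplit2 j]; exact hx
        have hxd : x ∈ e.drop p := by
          have h2 := List.of_mem_filter hx'
          simpa using h2
        have hdne : e.drop p ≠ [] := List.ne_nil_of_mem hxd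
        have hlt : ¬ e.length ≤ p := fun hle => hdne (List.drop_eq_nil_iff.mpr hle)
        omega
      · intro h0
        rw [h0] at hRlen
        simp at hRlen
        omega
  -- the covering family
  set MM : Fin k → List V := fun j => Mseg m e p (L j) with hMM
  have hMMj : ∀ j, MM j = Mseg m e p (L j) := fun j => by rw [hMM]
  set T : Fin k → Fin k → Set V := fun i j =>
    if (Mseg m e p (L i)).head! ≠ s i ∧ (Mseg m e p (L j)).getLast! ≠ t j then
      {v : V | Outward G ((Qseg m e p (L i)).tail) v ∧
        Inward G ((Rseg m e p (L j)).dropLast) v}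
    else ∅ with hT
  have hTij : ∀ i j : Fin k, T i j =
      if (Mseg m e p (L i)).head! ≠ s i ∧ (Mseg m e p (L j)).getLast! ≠ t j then
        {v : V | Outward G ((Qseg m e p (L i)).tail) v ∧
          Inward G ((Rseg m e p (L j)).dropLast) v}
      else ∅ := fun i j => by rw [hT]
  have hsub : RailA G t MM ∩ RailB G s MM ⊆ ⋃ q : Fin k × Fin k, T q.1 q.2 := by
    rintro v ⟨hvA, hvB⟩
    obtain ⟨hvA1, j, hjt, hjIn⟩ := hvA
    obtain ⟨hvB1, i, his, hiOut⟩ := hvB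
    simp only [hMMj] at hvA1 hvB1 hjt hjIn his hiOut
    refine Set.mem_iUnion.mpr ⟨(i, j), ?_⟩
    have hcond : (Mseg m e p (L i)).head! ≠ s i ∧ (Mseg m e p (L j)).getLast! ≠ t j :=
      ⟨his, hjt⟩
    rw [hTij i j, if_pos hcond]
    obtain ⟨hQlen, hp1, hQne⟩ := condB i hcond.1
    obtain ⟨hRlen, hp2, hRne⟩ := condA j hcond.2
    have htail : (Mseg m e p (L i)).tail =
        (Qseg m e p (L i)).tail ++ Rseg m e p (L i) :=
      List.tail_append_of_ne_nil hQne
    have hdropl : (Mseg m e p (L j)).dropLast =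
        Qseg m e p (L j) ++ (Rseg m e p (L j)).dropLast :=
      List.dropLast_append_of_ne_nil hRne
    refine ⟨⟨?_, ?_⟩, ?_, ?_⟩
    · intro hmem
      exact hvB1 i (List.mem_append_left _ (List.mem_of_mem_tail hmem))
    · intro w hw
      exact hiOut w (by rw [htail]; exact List.mem_append_left _ hw)
    · intro hmem
      exact hvA1 j (List.mem_append_right _ (List.mem_of_mem_dropLast hmem))
    · intro w hw
      exact hjIn w (by rw [hdropl]; exact List.mem_append_right _ hw)
  have hTcard : ∀ q : Fin k × Fin k, (T q.1 q.2).ncard ≤ c0 * (2*k+1) := by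
    rintro ⟨i, j⟩
    rw [hTij i j]
    by_cases hcond : (Mseg m e p (L i)).head! ≠ s i ∧ (Mseg m e p (L j)).getLast! ≠ t j
    · rw [if_pos hcond]
      obtain ⟨hQlen, hp1, hQne⟩ := condB i hcond.1
      obtain ⟨hRlen, hp2, hRne⟩ := condA j hcond.2
      have hQinf : (Qseg m e p (L i)).tail <:+: (L i).filter (· ∈ e.take p) := by
        refine List.IsSuffix.isInfix ?_
        refine (List.tail_suffix _).trans ?_
        unfold Qseg
        exact List.drop_suffix _ _
      have hRinf : (Rseg m e p (L j)).dropLast <:+: (L j).filter (· ∈ e.drop p) := by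
        refine List.IsPrefix.isInfix ?_
        refine (List.dropLast_prefix _).trans ?_
        unfold Rseg
        exact List.take_prefix _ _
      have hQl : ((Qseg m e p (L i)).tail).length = m - 1 := by
        rw [List.length_tail, hQlen]
      have hRl : ((Rseg m e p (L j)).dropLast).length = m - 1 := by
        rw [List.length_dropLast, hRlen]
      exact hb i j p hp1 hp2 _ _ hQinf hQl hRinf hRl
    · rw [if_neg hcond]; simp
  calc Confusion G s t MM
      = (RailA G t MM ∩ RailB G s MM).ncard := rfl
    _ ≤ (⋃ q : Fin k × Fin k, T q.1 q.2).ncard :=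
        Set.ncard_le_ncard hsub (Set.toFinite _)
    _ ≤ ∑ q : Fin k × Fin k, (T q.1 q.2).ncard := aux_ncard_iUnion_le _
    _ ≤ ∑ _q : Fin k × Fin k, c0 * (2*k+1) := Finset.sum_le_sum fun q _ => hTcard q
    _ = (k * k) * (c0 * (2*k+1)) := by
        rw [Finset.sum_const, Finset.card_univ, Fintype.card_prod, Fintype.card_fin,
          smul_eq_mul]
    _ = c0 * (2*k+1) * k^2 := by ring
end
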